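/- Let F : ℝ → ℝ be a continuous function that is periodic with period 1. Then F has every chord; that is, for every t ∈ ℝ there exists x ∈ ℝ such that F(x + t) = F(x). -/
import Mathlib

/-- Every continuous `1`-periodic function `F : ℝ → ℝ` has every chord: for each
`t ∈ ℝ` there is `x ∈ ℝ` with `F (x + t) = F x`. -/
theorem continuous_periodic_has_every_chord
    (F : ℝ → ℝ) (hF : Continuous F) (hFp : Function.Periodic F 1)
    (t : ℝ) :
    ∃ x : ℝ, F (x + t) = F x := by
  -- F attains max and min on [0,1]
  obtain ⟨a, _, ha⟩ := isCompact_Icc.exists_isMaxOn (f := F)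
    (Set.nonempty_Icc.mpr zero_le_one) hF.continuousOn
  obtain ⟨b, _, hb⟩ := isCompact_Icc.exists_isMinOn (f := F)
    (Set.nonempty_Icc.mpr zero_le_one) hF.continuousOn
  have hperiod : ∀ y : ℝ, F (Int.fract y) = F y := by
    intro y
    have h := hFp.sub_int_mul_eq (x := y) ⌊y⌋
    rw [Int.fract]
    simpa using h
  have hmax : ∀ y : ℝ, F y ≤ F a := by
    intro y
    rw [← hperiod y]
    exact ha (Set.mem_Icc.mpr ⟨Int.fract_nonneg y, (Int.fract_lt_one y).le⟩)
  have hmin : ∀ y : ℝ, F b ≤ F y := by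
    intro y
    rw [← hperiod y]
    exact hb (Set.mem_Icc.mpr ⟨Int.fract_nonneg y, (Int.fract_lt_one y).le⟩)
  set G : ℝ → ℝ := fun x => F (x + t) - F x with hG
  have hGc : Continuous G := (hF.comp (continuous_id.add continuous_const)).sub hF
  have hGa : G a ≤ 0 := sub_nonpos.mpr (hmax (a + t))
  have hGb : 0 ≤ G b := sub_nonneg.mpr (hmin (b + t))
  have h0 : (0 : ℝ) ∈ Set.uIcc (G a) (G b) := Set.mem_uIcc.mpr (Or.inl ⟨hGa, hGb⟩)
  obtain ⟨x, _, hx⟩ := intermediate_value_uIcc (f := G) hGc.continuousOn h0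
  exact ⟨x, by have : F (x + t) - F x = 0 := hx; linarith⟩
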